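/- Let 𝕊 be a finite collection of subsets of [d] and let Σ_𝕊 = (Σ_S : S ∈ 𝕊) be a sequence of positive semi-definite symmetric matrices (Σ_S of size |S|×|S|). Then there exists a d×d positive semi-definite symmetric matrix Σ with (Σ)_{jj'} = (Σ_S)_{jj'} for all S ∈ 𝕊 and all j, j' ∈ S, if and only if ⟨X_𝕊, Σ_𝕊⟩_𝕊 ≥ 0 for all sequences X_𝕊 of symmetric matrices satisfying A* X_𝕊 ⪰ 0. -/

import Mathlib

open scoped InnerProductSpace
open Matrix

namespace Stmt12Aux
lemma psd_sum_mul_nonneg {n : Type*} [Fintype n] {N M : Matrix n n ℝ}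
    (hN : N.PosSemidef) (hM : M.PosSemidef) : 0 ≤ ∑ j, ∑ k, N j k * M j k := by
  obtain ⟨C, rfl⟩ : ∃ C : Matrix n n ℝ, M = Cᴴ * C := by
    classical
    open scoped MatrixOrder in exact CStarAlgebra.nonneg_iff_eq_star_mul_self.mp hM.nonneg
  have hC : ∀ j k, (Cᴴ * C) j k = ∑ l, C l j * C l k := by
    intro j k
    simp [Matrix.mul_apply, Matrix.conjTranspose_apply]
  calc (0:ℝ) ≤ ∑ l, (fun j => C l j) ⬝ᵥ (N *ᵥ fun k => C l k) := by
        apply Finset.sum_nonneg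
        intro l _
        simpa using hN.dotProduct_mulVec_nonneg (fun j => C l j)
    _ = ∑ j, ∑ k, N j k * (Cᴴ * C) j k := by
        simp only [dotProduct, Matrix.mulVec, hC, Finset.mul_sum, Finset.sum_mul]
        rw [Finset.sum_comm]
        refine Finset.sum_congr rfl fun j _ => ?_
        rw [Finset.sum_comm]
        refine Finset.sum_congr rfl fun k _ => ?_
        refine Finset.sum_congr rfl fun l _ => ?_
        ring

lemma psd_row_zero {n : Type*} [Fintype n] {M : Matrix n n ℝ}
    (hM : M.PosSemidef) {j : n} (h : M j j = 0) (k : n) : M j k = 0 := by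
  obtain ⟨B, rfl⟩ : ∃ B : Matrix n n ℝ, M = Bᴴ * B := by
    classical
    open scoped MatrixOrder in exact CStarAlgebra.nonneg_iff_eq_star_mul_self.mp hM.nonneg
  have hsum : ∑ i, B i j * B i j = 0 := by
    simpa [Matrix.mul_apply, Matrix.conjTranspose_apply] using h
  have hj : ∀ i, B i j = 0 := by
    intro i
    have := (Finset.sum_eq_zero_iff_of_nonneg
      (fun i _ => mul_self_nonneg (B i j))).mp hsum i (Finset.mem_univ i)
    exact mul_self_eq_zero.mp this
  simp [Matrix.mul_apply, Matrix.conjTranspose_apply, hj]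

lemma closed_image_of_cone {E F : Type*} [NormedAddCommGroup E] [NormedSpace ℝ E] [ProperSpace E]
    [NormedAddCommGroup F] [NormedSpace ℝ F]
    (L : E →L[ℝ] F) (K : Set E) (hK : IsClosed K)
    (hcone : ∀ (c : ℝ), 0 ≤ c → ∀ x ∈ K, c • x ∈ K)
    (hker : ∀ x ∈ K, L x = 0 → x = 0) : IsClosed (L '' K) := by
  by_cases hKs : (K ∩ Metric.sphere (0:E) 1).Nonempty
  · -- compact intersection, positive minimum
    have hC : IsCompact (K ∩ Metric.sphere (0:E) 1) :=
      (isCompact_sphere (0:E) 1).inter_left hK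
    obtain ⟨x₀, hx₀, hmin⟩ := hC.exists_isMinOn hKs
      ((continuous_norm.comp L.continuous).continuousOn)
    have hx₀n : ‖x₀‖ = 1 := mem_sphere_zero_iff_norm.mp hx₀.2
    have hc : 0 < ‖L x₀‖ := by
      rw [norm_pos_iff]
      intro h0
      have := hker x₀ hx₀.1 h0
      rw [this] at hx₀n
      simp at hx₀n
    have key : ∀ x ∈ K, ‖L x₀‖ * ‖x‖ ≤ ‖L x‖ := by
      intro x hx
      by_cases hx0 : x = 0
      · simp [hx0]
      · have hnx : 0 < ‖x‖ := norm_pos_iff.mpr hx0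
        have hu : (‖x‖⁻¹ • x) ∈ K ∩ Metric.sphere (0:E) 1 := by
          refine ⟨hcone _ (by positivity) x hx, ?_⟩
          rw [mem_sphere_zero_iff_norm, norm_smul, norm_inv, norm_norm,
            inv_mul_cancel₀ hnx.ne']
        have := hmin hu
        simp only [Set.mem_setOf_eq, Function.comp_apply, _root_.map_smul, norm_smul, norm_inv,
          norm_norm] at this
        calc ‖L x₀‖ * ‖x‖ ≤ (‖x‖⁻¹ * ‖L x‖) * ‖x‖ := by
              exact mul_le_mul_of_nonneg_right this hnx.le
          _ = ‖L x‖ := by field_simp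
    refine IsSeqClosed.isClosed ?_
    intro f y hmem hf
    choose u huK huL using hmem
    have hb : BddAbove (Set.range fun n => ‖f n‖) := hf.norm.bddAbove_range
    obtain ⟨R, hR⟩ := hb
    have hub : ∀ n, ‖u n‖ ≤ R / ‖L x₀‖ := by
      intro n
      rw [le_div_iff₀ hc, mul_comm]
      calc ‖L x₀‖ * ‖u n‖ ≤ ‖L (u n)‖ := key _ (huK n)
        _ = ‖f n‖ := by rw [huL n]
        _ ≤ R := hR ⟨n, rfl⟩
    obtain ⟨a, -, φ, hφ, hta⟩ :=
      (isCompact_closedBall (0:E) (R / ‖L x₀‖)).tendsto_subseq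
        (fun n => mem_closedBall_zero_iff.mpr (hub n))
    have haK : a ∈ K := hK.mem_of_tendsto hta (Filter.Eventually.of_forall fun n => huK _)
    have h1 : Filter.Tendsto (fun n => L (u (φ n))) Filter.atTop (nhds (L a)) :=
      (L.continuous.tendsto a).comp hta
    have h2 : Filter.Tendsto (fun n => L (u (φ n))) Filter.atTop (nhds y) := by
      simp only [huL]
      exact hf.comp hφ.tendsto_atTop
    exact ⟨a, haK, tendsto_nhds_unique h1 h2⟩
  · -- K ⊆ {0}
    have hK0 : ∀ x ∈ K, x = 0 := by
      intro x hx
      by_contra hx0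
      have hnx : 0 < ‖x‖ := norm_pos_iff.mpr hx0
      exact hKs ⟨‖x‖⁻¹ • x, hcone _ (by positivity) x hx,
        by rw [mem_sphere_zero_iff_norm, norm_smul, norm_inv, norm_norm,
          inv_mul_cancel₀ hnx.ne']⟩
    have : L '' K ⊆ {0} := by
      rintro _ ⟨x, hx, rfl⟩
      simp [hK0 x hx]
    exact (Set.subsingleton_of_subset_singleton this).isClosed


variable {d : ℕ}

noncomputable def matOf (m : EuclideanSpace ℝ (Fin d × Fin d)) : Matrix (Fin d) (Fin d) ℝ :=
  Matrix.of fun j j' => m (j, j')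

lemma posSemidef_iff_forms (M : Matrix (Fin d) (Fin d) ℝ) :
    M.PosSemidef ↔ (∀ j j', M j j' = M j' j) ∧
      ∀ v : Fin d → ℝ, 0 ≤ ∑ j, ∑ j', v j * M j j' * v j' := by
  have hq : ∀ v : Fin d → ℝ, star v ⬝ᵥ M *ᵥ v = ∑ j, ∑ j', v j * M j j' * v j' := by
    intro v
    simp only [dotProduct, Matrix.mulVec, Pi.star_apply, star_trivial,
      Finset.mul_sum, dotProduct]
    exact Finset.sum_congr rfl fun j _ => Finset.sum_congr rfl fun j' _ => by ring
  constructor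
  · intro h
    refine ⟨fun j j' => ?_, fun v => by rw [← hq]; exact h.dotProduct_mulVec_nonneg v⟩
    conv_lhs => rw [← h.1]
    simp [Matrix.conjTranspose_apply]
  · rintro ⟨hs, hv⟩
    refine Matrix.PosSemidef.of_dotProduct_mulVec_nonneg ?_ fun v => by rw [hq]; exact hv v
    ext j j'
    simp [Matrix.conjTranspose_apply, hs j j']


variable (𝕊 : Finset (Finset (Fin d)))

def Uset : Finset (Fin d) := 𝕊.biUnion id

def Kset : Set (EuclideanSpace ℝ (Fin d × Fin d)) :=
  {m | (∀ j j', m (j, j') = m (j', j)) ∧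
    (∀ v : Fin d → ℝ, 0 ≤ ∑ j, ∑ j', v j * m (j, j') * v j') ∧
    ∀ p : Fin d × Fin d, (p.1 ∉ Uset 𝕊 ∨ p.2 ∉ Uset 𝕊) → m p = 0}

lemma Kset_psd {m : EuclideanSpace ℝ (Fin d × Fin d)} (hm : m ∈ Kset 𝕊) :
    (matOf m).PosSemidef :=
  (posSemidef_iff_forms _).mpr ⟨hm.1, hm.2.1⟩

lemma Kset_isClosed : IsClosed (Kset 𝕊) := by
  have h1 : IsClosed {m : EuclideanSpace ℝ (Fin d × Fin d) | ∀ j j', m (j, j') = m (j', j)} := by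
    have : {m : EuclideanSpace ℝ (Fin d × Fin d) | ∀ j j', m (j, j') = m (j', j)} =
        ⋂ j, ⋂ j', {m : EuclideanSpace ℝ (Fin d × Fin d) | m (j, j') = m (j', j)} := by
      ext m; simp [Set.mem_iInter]
    rw [this]
    exact isClosed_iInter fun j => isClosed_iInter fun j' =>
      isClosed_eq (EuclideanSpace.proj (j, j')).continuous (EuclideanSpace.proj (j', j)).continuous
  have h2 : IsClosed {m : EuclideanSpace ℝ (Fin d × Fin d) |
      ∀ v : Fin d → ℝ, 0 ≤ ∑ j, ∑ j', v j * m (j, j') * v j'} := by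
    have : {m : EuclideanSpace ℝ (Fin d × Fin d) |
        ∀ v : Fin d → ℝ, 0 ≤ ∑ j, ∑ j', v j * m (j, j') * v j'} =
        ⋂ v : Fin d → ℝ, {m : EuclideanSpace ℝ (Fin d × Fin d) |
          0 ≤ ∑ j, ∑ j', v j * m (j, j') * v j'} := by
      ext m; simp [Set.mem_iInter]
    rw [this]
    refine isClosed_iInter fun v => isClosed_le continuous_const ?_
    refine continuous_finset_sum _ fun j _ => continuous_finset_sum _ fun j' _ => ?_
    exact (continuous_const.mul (EuclideanSpace.proj ((j, j') : Fin d × Fin d)).continuous).mul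
      continuous_const
  have h3 : IsClosed {m : EuclideanSpace ℝ (Fin d × Fin d) |
      ∀ p : Fin d × Fin d, (p.1 ∉ Uset 𝕊 ∨ p.2 ∉ Uset 𝕊) → m p = 0} := by
    have : {m : EuclideanSpace ℝ (Fin d × Fin d) |
        ∀ p : Fin d × Fin d, (p.1 ∉ Uset 𝕊 ∨ p.2 ∉ Uset 𝕊) → m p = 0} =
        ⋂ p : Fin d × Fin d, {m : EuclideanSpace ℝ (Fin d × Fin d) |
          (p.1 ∉ Uset 𝕊 ∨ p.2 ∉ Uset 𝕊) → m p = 0} := by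
      ext m; simp [Set.mem_iInter]
    rw [this]
    refine isClosed_iInter fun p => ?_
    by_cases hp : p.1 ∉ Uset 𝕊 ∨ p.2 ∉ Uset 𝕊
    · simp only [hp, forall_true_left]
      exact isClosed_eq (EuclideanSpace.proj p).continuous continuous_const
    · simp only [hp, IsEmpty.forall_iff]
      simp [Set.setOf_true]
  have heq : Kset 𝕊 = ({m : EuclideanSpace ℝ (Fin d × Fin d) | ∀ j j', m (j, j') = m (j', j)} ∩
      {m : EuclideanSpace ℝ (Fin d × Fin d) |
        ∀ v : Fin d → ℝ, 0 ≤ ∑ j, ∑ j', v j * m (j, j') * v j'}) ∩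
      {m : EuclideanSpace ℝ (Fin d × Fin d) |
        ∀ p : Fin d × Fin d, (p.1 ∉ Uset 𝕊 ∨ p.2 ∉ Uset 𝕊) → m p = 0} := by
    ext m
    simp only [Kset, Set.mem_inter_iff, Set.mem_setOf_eq]
    tauto
  rw [heq]
  exact (h1.inter h2).inter h3


lemma Kset_zero : (0 : EuclideanSpace ℝ (Fin d × Fin d)) ∈ Kset 𝕊 := by
  refine ⟨fun j j' => rfl, fun v => ?_, fun p _ => rfl⟩
  simp

lemma Kset_add {a b : EuclideanSpace ℝ (Fin d × Fin d)} (ha : a ∈ Kset 𝕊) (hb : b ∈ Kset 𝕊) :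
    a + b ∈ Kset 𝕊 := by
  refine ⟨fun j j' => ?_, fun v => ?_, fun p hp => ?_⟩
  · simp [PiLp.add_apply, ha.1 j j', hb.1 j j']
  · have := add_nonneg (ha.2.1 v) (hb.2.1 v)
    calc (0:ℝ) ≤ (∑ j, ∑ j', v j * a (j, j') * v j') + ∑ j, ∑ j', v j * b (j, j') * v j' := this
      _ = ∑ j, ∑ j', v j * (a + b) (j, j') * v j' := by
        rw [← Finset.sum_add_distrib]
        refine Finset.sum_congr rfl fun j _ => ?_
        rw [← Finset.sum_add_distrib]
        refine Finset.sum_congr rfl fun j' _ => ?_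
        simp [PiLp.add_apply]; ring
  · simp [PiLp.add_apply, ha.2.2 p hp, hb.2.2 p hp]

lemma Kset_smul {a : EuclideanSpace ℝ (Fin d × Fin d)} (ha : a ∈ Kset 𝕊) {c : ℝ} (hc : 0 ≤ c) :
    c • a ∈ Kset 𝕊 := by
  refine ⟨fun j j' => ?_, fun v => ?_, fun p hp => ?_⟩
  · simp [PiLp.smul_apply, ha.1 j j']
  · have h : ∑ j, ∑ j', v j * (c • a) (j, j') * v j'
        = c * ∑ j, ∑ j', v j * a (j, j') * v j' := by
      rw [Finset.mul_sum]
      refine Finset.sum_congr rfl fun j _ => ?_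
      rw [Finset.mul_sum]
      refine Finset.sum_congr rfl fun j' _ => ?_
      simp [PiLp.smul_apply]; ring
    rw [h]
    exact mul_nonneg hc (ha.2.1 v)
  · simp [PiLp.smul_apply, ha.2.2 p hp]

noncomputable def Kcone : ProperCone ℝ (EuclideanSpace ℝ (Fin d × Fin d)) where
  toSubmodule :=
    { carrier := Kset 𝕊
      add_mem' := fun ha hb => Kset_add 𝕊 ha hb
      zero_mem' := Kset_zero 𝕊
      smul_mem' := fun c a ha => Kset_smul 𝕊 ha c.2 }
  isClosed' := Kset_isClosed 𝕊

lemma mem_Kcone {m : EuclideanSpace ℝ (Fin d × Fin d)} : m ∈ Kcone 𝕊 ↔ m ∈ Kset 𝕊 := Iff.rfl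

noncomputable def lmap : EuclideanSpace ℝ (Fin d × Fin d) →L[ℝ]
    EuclideanSpace ℝ ({S // S ∈ 𝕊} × (Fin d × Fin d)) :=
  LinearMap.toContinuousLinearMap
    { toFun := fun m => WithLp.toLp 2 fun p : {S // S ∈ 𝕊} × (Fin d × Fin d) =>
        if p.2.1 ∈ (p.1 : Finset (Fin d)) ∧ p.2.2 ∈ (p.1 : Finset (Fin d)) then m p.2 else 0
      map_add' := by
        intro x y
        ext p
        by_cases h : p.2.1 ∈ (p.1 : Finset (Fin d)) ∧ p.2.2 ∈ (p.1 : Finset (Fin d)) <;>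
          simp [h, PiLp.add_apply]
      map_smul' := by
        intro c x
        ext p
        by_cases h : p.2.1 ∈ (p.1 : Finset (Fin d)) ∧ p.2.2 ∈ (p.1 : Finset (Fin d)) <;>
          simp [h, PiLp.smul_apply] }

lemma lmap_apply (m : EuclideanSpace ℝ (Fin d × Fin d))
    (p : {S // S ∈ 𝕊} × (Fin d × Fin d)) :
    lmap 𝕊 m p =
      if p.2.1 ∈ (p.1 : Finset (Fin d)) ∧ p.2.2 ∈ (p.1 : Finset (Fin d)) then m p.2 else 0 := rfl


lemma psd_row_zero' {n : Type*} [Fintype n] {M : Matrix n n ℝ}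
    (hM : M.PosSemidef) {j : n} (h : M j j = 0) (k : n) : M j k = 0 := by
  obtain ⟨B, rfl⟩ : ∃ B : Matrix n n ℝ, M = Bᴴ * B := by
    classical
    open scoped MatrixOrder in exact CStarAlgebra.nonneg_iff_eq_star_mul_self.mp hM.nonneg
  have hsum : ∑ i, B i j * B i j = 0 := by
    simpa [Matrix.mul_apply, Matrix.conjTranspose_apply] using h
  have hj : ∀ i, B i j = 0 := by
    intro i
    have := (Finset.sum_eq_zero_iff_of_nonneg
      (fun i _ => mul_self_nonneg (B i j))).mp hsum i (Finset.mem_univ i)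
    exact mul_self_eq_zero.mp this
  simp [Matrix.mul_apply, Matrix.conjTranspose_apply, hj]

lemma lmap_ker {m : EuclideanSpace ℝ (Fin d × Fin d)} (hm : m ∈ Kset 𝕊)
    (h : lmap 𝕊 m = 0) : m = 0 := by
  have hdiag : ∀ j ∈ Uset 𝕊, m (j, j) = 0 := by
    intro j hj
    obtain ⟨S, hS, hjS⟩ := Finset.mem_biUnion.mp hj
    simp only [id_eq] at hjS
    have : lmap 𝕊 m (⟨S, hS⟩, (j, j)) =
        (0 : EuclideanSpace ℝ ({S // S ∈ 𝕊} × (Fin d × Fin d))) (⟨S, hS⟩, (j, j)) := by rw [h]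
    rw [lmap_apply] at this
    simpa [hjS] using this
  have hall : ∀ p : Fin d × Fin d, m p = 0 := by
    rintro ⟨j, j'⟩
    by_cases hj : j ∈ Uset 𝕊
    · have hpsd := Kset_psd 𝕊 hm
      have : (matOf m) j j = 0 := hdiag j hj
      have := psd_row_zero' hpsd this j'
      simpa [matOf] using this
    · exact hm.2.2 (j, j') (Or.inl hj)
  ext p
  exact hall p


lemma image_closed : IsClosed (lmap 𝕊 '' Kset 𝕊) :=
  closed_image_of_cone (lmap 𝕊) (Kset 𝕊) (Kset_isClosed 𝕊)
    (fun c hc x hx => Kset_smul 𝕊 hx hc) (fun x hx h0 => lmap_ker 𝕊 hx h0)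

lemma exists_of_mem_map {b : EuclideanSpace ℝ ({S // S ∈ 𝕊} × (Fin d × Fin d))}
    (hb : b ∈ (Kcone 𝕊).map (lmap 𝕊)) :
    ∃ m ∈ Kset 𝕊, lmap 𝕊 m = b := by
  rw [ProperCone.mem_map, PointedCone.mem_closure, PointedCone.coe_map] at hb
  have hb2 : b ∈ closure (⇑(lmap 𝕊) '' (Kset 𝕊)) := hb
  rw [(image_closed 𝕊).closure_eq] at hb2
  exact hb2


noncomputable def bvec (Sig : Finset (Fin d) → Matrix (Fin d) (Fin d) ℝ) :
    EuclideanSpace ℝ ({S // S ∈ 𝕊} × (Fin d × Fin d)) :=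
  WithLp.toLp 2 fun p : {S // S ∈ 𝕊} × (Fin d × Fin d) =>
    if p.2.1 ∈ (p.1 : Finset (Fin d)) ∧ p.2.2 ∈ (p.1 : Finset (Fin d)) then
    Sig p.1 p.2.1 p.2.2 else 0

lemma mem_Uset_of_mem {S : Finset (Fin d)} (hS : S ∈ 𝕊) {j : Fin d} (hj : j ∈ S) :
    j ∈ Uset 𝕊 :=
  Finset.mem_biUnion.mpr ⟨S, hS, hj⟩

lemma inner_FF (x y : EuclideanSpace ℝ ({S // S ∈ 𝕊} × (Fin d × Fin d))) :
    ⟪x, y⟫_ℝ = ∑ p, x p * y p := by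
  simp [PiLp.inner_apply, RCLike.inner_apply, mul_comm]

lemma sum_FF (g : {S // S ∈ 𝕊} × (Fin d × Fin d) → ℝ) :
    ∑ p, g p = ∑ S ∈ 𝕊.attach, ∑ j, ∑ j', g (S, (j, j')) := by
  rw [Fintype.sum_prod_type, Finset.univ_eq_attach]
  exact Finset.sum_congr rfl fun S _ => Fintype.sum_prod_type _

lemma double_ite_sum (S : Finset (Fin d)) (f : Fin d → Fin d → ℝ) :
    (∑ j, ∑ j', if j ∈ S ∧ j' ∈ S then f j j' else 0) = ∑ j ∈ S, ∑ j' ∈ S, f j j' := by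
  have h1 : ∀ j, (∑ j', if j ∈ S ∧ j' ∈ S then f j j' else 0)
      = if j ∈ S then ∑ j' ∈ S, f j j' else 0 := by
    intro j
    by_cases hj : j ∈ S
    · simp only [hj, true_and]
      rw [Finset.sum_ite_mem, Finset.univ_inter, if_pos trivial]
    · simp [hj]
  simp only [h1]
  rw [Finset.sum_ite_mem, Finset.univ_inter]


variable {𝕊}

noncomputable def Xof (y : EuclideanSpace ℝ ({S // S ∈ 𝕊} × (Fin d × Fin d))) :
    Finset (Fin d) → Matrix (Fin d) (Fin d) ℝ := fun S =>
  Matrix.of fun j j' =>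
    if hS : S ∈ 𝕊 then
      (if j ∈ S ∧ j' ∈ S then (y (⟨S, hS⟩, (j, j')) + y (⟨S, hS⟩, (j', j))) / 2 else 0)
    else 0

variable (y : EuclideanSpace ℝ ({S // S ∈ 𝕊} × (Fin d × Fin d)))

lemma Xof_apply {S : Finset (Fin d)} (hS : S ∈ 𝕊) (j j' : Fin d) :
    Xof y S j j' =
      if j ∈ S ∧ j' ∈ S then (y (⟨S, hS⟩, (j, j')) + y (⟨S, hS⟩, (j', j))) / 2 else 0 := by
  simp [Xof, hS]

lemma Xof_apply_mem {S : Finset (Fin d)} (hS : S ∈ 𝕊) {j j' : Fin d}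
    (hj : j ∈ S) (hj' : j' ∈ S) :
    Xof y S j j' = (y (⟨S, hS⟩, (j, j')) + y (⟨S, hS⟩, (j', j))) / 2 := by
  rw [Xof_apply y hS, if_pos ⟨hj, hj'⟩]

lemma Xof_symm_apply (S : Finset (Fin d)) (j j' : Fin d) :
    Xof y S j j' = Xof y S j' j := by
  by_cases hS : S ∈ 𝕊
  · rw [Xof_apply y hS, Xof_apply y hS]
    by_cases hp : j ∈ S ∧ j' ∈ S
    · rw [if_pos hp, if_pos ⟨hp.2, hp.1⟩]; ring
    · rw [if_neg hp, if_neg fun hc => hp ⟨hc.2, hc.1⟩]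
  · simp [Xof, hS]

lemma Xof_isSymm (S : Finset (Fin d)) : (Xof y S).IsSymm := by
  unfold Matrix.IsSymm
  ext j j'
  rw [Matrix.transpose_apply]
  exact Xof_symm_apply y S j' j

lemma Xof_psd (hy : ContinuousLinearMap.adjoint (lmap 𝕊) y ∈
      ProperCone.innerDual (Kcone 𝕊 : Set (EuclideanSpace ℝ (Fin d × Fin d)))) :
    (Matrix.of fun j j' : Fin d =>
      ∑ S ∈ 𝕊.filter (fun S => j ∈ S ∧ j' ∈ S), Xof y S j j').PosSemidef := by
  rw [posSemidef_iff_forms]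
  have hfil : ∀ j j' : Fin d, ∑ S ∈ 𝕊.filter (fun S => j ∈ S ∧ j' ∈ S), Xof y S j j'
      = ∑ S ∈ 𝕊, Xof y S j j' := by
    intro j j'
    refine Finset.sum_filter_of_ne fun S hS hne => ?_
    by_contra hp
    exact hne (by rw [Xof_apply y hS, if_neg hp])
  constructor
  · intro j j'
    simp only [Matrix.of_apply, hfil]
    exact Finset.sum_congr rfl fun S _ => Xof_symm_apply y S j j'
  · intro v
    set w : Fin d → ℝ := fun j => if j ∈ Uset 𝕊 then v j else 0 with hw
    set m : EuclideanSpace ℝ (Fin d × Fin d) := WithLp.toLp 2 (fun p : Fin d × Fin d => w p.1 * w p.2) with hmdef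
    have hmap : ∀ p : Fin d × Fin d, m p = w p.1 * w p.2 := fun p => rfl
    have hmK : m ∈ Kset 𝕊 := by
      refine ⟨fun j j' => ?_, fun u => ?_, fun p hp => ?_⟩
      · rw [hmap, hmap]; exact mul_comm _ _
      · have hq : ∑ j, ∑ j', u j * m (j, j') * u j'
            = (∑ j, u j * w j) * (∑ j, u j * w j) := by
          rw [Finset.sum_mul_sum]
          exact Finset.sum_congr rfl fun j _ => Finset.sum_congr rfl fun j' _ => by
            rw [hmap]; ring
        rw [hq]; exact mul_self_nonneg _
      · rcases hp with hp | hp <;> rw [hmap] <;> simp [hw, hp]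
    have h0 : 0 ≤ ⟪m, ContinuousLinearMap.adjoint (lmap 𝕊) y⟫_ℝ := ProperCone.mem_innerDual.mp hy hmK
    rw [ContinuousLinearMap.adjoint_inner_right] at h0
    refine le_trans h0 (le_of_eq ?_)
    rw [inner_FF, sum_FF]
    have step1 : ∀ S : {S // S ∈ 𝕊}, ∑ j, ∑ j', lmap 𝕊 m (S, (j, j')) * y (S, (j, j'))
        = ∑ j ∈ (S : Finset (Fin d)), ∑ j' ∈ (S : Finset (Fin d)), w j * w j' * y (S, (j, j')) := by
      intro S
      rw [← double_ite_sum (S : Finset (Fin d)) (fun j j' => w j * w j' * y (S, (j, j')))]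
      refine Finset.sum_congr rfl fun j _ => Finset.sum_congr rfl fun j' _ => ?_
      rw [lmap_apply]
      by_cases hp : j ∈ (S : Finset (Fin d)) ∧ j' ∈ (S : Finset (Fin d))
      · rw [if_pos hp, if_pos hp, hmap]
      · rw [if_neg hp, if_neg hp, zero_mul]
    have step2 : ∀ j j', v j * (Matrix.of fun j j' : Fin d =>
          ∑ S ∈ 𝕊.filter (fun S => j ∈ S ∧ j' ∈ S), Xof y S j j') j j' * v j'
        = ∑ S ∈ 𝕊, v j * Xof y S j j' * v j' := by
      intro j j'
      simp only [Matrix.of_apply, hfil]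
      rw [Finset.mul_sum, Finset.sum_mul]
    have swap : ∑ j, ∑ j', ∑ S ∈ 𝕊, v j * Xof y S j j' * v j'
        = ∑ S ∈ 𝕊, ∑ j, ∑ j', v j * Xof y S j j' * v j' := by
      calc ∑ j, ∑ j', ∑ S ∈ 𝕊, v j * Xof y S j j' * v j'
          = ∑ j, ∑ S ∈ 𝕊, ∑ j', v j * Xof y S j j' * v j' :=
            Finset.sum_congr rfl fun j _ => Finset.sum_comm
        _ = ∑ S ∈ 𝕊, ∑ j, ∑ j', v j * Xof y S j j' * v j' := Finset.sum_comm
    have perS : ∀ S : {S // S ∈ 𝕊},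
        ∑ j ∈ (S : Finset (Fin d)), ∑ j' ∈ (S : Finset (Fin d)), w j * w j' * y (S, (j, j'))
        = ∑ j, ∑ j', v j * Xof y (S : Finset (Fin d)) j j' * v j' := by
      intro S
      have hS := S.2
      have hA : ∑ j ∈ (S : Finset (Fin d)), ∑ j' ∈ (S : Finset (Fin d)),
            w j * w j' * y (S, (j, j'))
          = ∑ j ∈ (S : Finset (Fin d)), ∑ j' ∈ (S : Finset (Fin d)),
            v j * v j' * y (S, (j, j')) :=
        Finset.sum_congr rfl fun j hj => Finset.sum_congr rfl fun j' hj' => by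
          simp only [hw]
          simp [mem_Uset_of_mem 𝕊 hS hj, mem_Uset_of_mem 𝕊 hS hj']
      have hB : ∑ j ∈ (S : Finset (Fin d)), ∑ j' ∈ (S : Finset (Fin d)),
            v j * v j' * y (S, (j', j))
          = ∑ j ∈ (S : Finset (Fin d)), ∑ j' ∈ (S : Finset (Fin d)),
            v j * v j' * y (S, (j, j')) := by
        rw [Finset.sum_comm]
        exact Finset.sum_congr rfl fun j _ => Finset.sum_congr rfl fun j' _ => by ring
      have hC : ∑ j ∈ (S : Finset (Fin d)), ∑ j' ∈ (S : Finset (Fin d)),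
            ((v j * v j' * y (S, (j, j')) + v j * v j' * y (S, (j', j))) / 2)
          = ((∑ j ∈ (S : Finset (Fin d)), ∑ j' ∈ (S : Finset (Fin d)),
              v j * v j' * y (S, (j, j')))
            + ∑ j ∈ (S : Finset (Fin d)), ∑ j' ∈ (S : Finset (Fin d)),
              v j * v j' * y (S, (j', j))) / 2 := by
        have inner : ∀ j : Fin d,
            ∑ j' ∈ (S : Finset (Fin d)),
              ((v j * v j' * y (S, (j, j')) + v j * v j' * y (S, (j', j))) / 2)
            = ((∑ j' ∈ (S : Finset (Fin d)), v j * v j' * y (S, (j, j')))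
              + ∑ j' ∈ (S : Finset (Fin d)), v j * v j' * y (S, (j', j))) / 2 := fun j => by
          rw [← Finset.sum_div, Finset.sum_add_distrib]
        simp only [inner]
        rw [← Finset.sum_div, Finset.sum_add_distrib]
      calc ∑ j ∈ (S : Finset (Fin d)), ∑ j' ∈ (S : Finset (Fin d)), w j * w j' * y (S, (j, j'))
          = ∑ j ∈ (S : Finset (Fin d)), ∑ j' ∈ (S : Finset (Fin d)),
              v j * v j' * y (S, (j, j')) := hA
        _ = ∑ j ∈ (S : Finset (Fin d)), ∑ j' ∈ (S : Finset (Fin d)),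
              ((v j * v j' * y (S, (j, j')) + v j * v j' * y (S, (j', j))) / 2) := by
            rw [hC, hB]; ring
        _ = ∑ j, ∑ j', v j * Xof y (S : Finset (Fin d)) j j' * v j' := by
            rw [← double_ite_sum (S : Finset (Fin d)) (fun j j' =>
              (v j * v j' * y (S, (j, j')) + v j * v j' * y (S, (j', j))) / 2)]
            refine Finset.sum_congr rfl fun j _ => Finset.sum_congr rfl fun j' _ => ?_
            rw [Xof_apply y hS]
            by_cases hp : j ∈ (S : Finset (Fin d)) ∧ j' ∈ (S : Finset (Fin d))
            · rw [if_pos hp, if_pos hp, Subtype.coe_eta]; ring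
            · rw [if_neg hp, if_neg hp]; ring
    calc ∑ S ∈ 𝕊.attach, ∑ j, ∑ j', lmap 𝕊 m (S, (j, j')) * y (S, (j, j'))
        = ∑ S ∈ 𝕊.attach, ∑ j, ∑ j', v j * Xof y (S : Finset (Fin d)) j j' * v j' :=
          Finset.sum_congr rfl fun S _ => (step1 S).trans (perS S)
      _ = ∑ S ∈ 𝕊, ∑ j, ∑ j', v j * Xof y S j j' * v j' :=
          Finset.sum_attach 𝕊 (fun S => ∑ j, ∑ j', v j * Xof y S j j' * v j')
      _ = ∑ j, ∑ j', ∑ S ∈ 𝕊, v j * Xof y S j j' * v j' := swap.symm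
      _ = ∑ j, ∑ j', v j * (Matrix.of fun j j' : Fin d =>
            ∑ S ∈ 𝕊.filter (fun S => j ∈ S ∧ j' ∈ S), Xof y S j j') j j' * v j' :=
          Finset.sum_congr rfl fun j _ => Finset.sum_congr rfl fun j' _ => (step2 j j').symm


lemma bvec_apply (Sig : Finset (Fin d) → Matrix (Fin d) (Fin d) ℝ)
    (p : {S // S ∈ 𝕊} × (Fin d × Fin d)) :
    bvec 𝕊 Sig p = if p.2.1 ∈ (p.1 : Finset (Fin d)) ∧ p.2.2 ∈ (p.1 : Finset (Fin d)) then
      Sig p.1 p.2.1 p.2.2 else 0 := rfl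

lemma inner_y_bvec (Sig : Finset (Fin d) → Matrix (Fin d) (Fin d) ℝ)
    (hsymm : ∀ S ∈ 𝕊, ∀ j ∈ S, ∀ j' ∈ S, Sig S j j' = Sig S j' j) :
    ⟪y, bvec 𝕊 Sig⟫_ℝ = ∑ S ∈ 𝕊, ∑ j ∈ S, ∑ j' ∈ S, Xof y S j j' * Sig S j j' := by
  rw [inner_FF, sum_FF,
    ← Finset.sum_attach 𝕊 (fun S => ∑ j ∈ S, ∑ j' ∈ S, Xof y S j j' * Sig S j j')]
  refine Finset.sum_congr rfl fun S _ => ?_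
  have hS := S.2
  have hA : ∑ j, ∑ j', y (S, (j, j')) * bvec 𝕊 Sig (S, (j, j'))
      = ∑ j ∈ (S : Finset (Fin d)), ∑ j' ∈ (S : Finset (Fin d)),
          y (S, (j, j')) * Sig (S : Finset (Fin d)) j j' := by
    rw [← double_ite_sum (S : Finset (Fin d)) (fun j j' =>
      y (S, (j, j')) * Sig (S : Finset (Fin d)) j j')]
    refine Finset.sum_congr rfl fun j _ => Finset.sum_congr rfl fun j' _ => ?_
    rw [bvec_apply]
    by_cases hp : j ∈ (S : Finset (Fin d)) ∧ j' ∈ (S : Finset (Fin d))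
    · rw [if_pos hp, if_pos hp]
    · rw [if_neg hp, if_neg hp, mul_zero]
  have hB : ∑ j ∈ (S : Finset (Fin d)), ∑ j' ∈ (S : Finset (Fin d)),
        y (S, (j', j)) * Sig (S : Finset (Fin d)) j j'
      = ∑ j ∈ (S : Finset (Fin d)), ∑ j' ∈ (S : Finset (Fin d)),
        y (S, (j, j')) * Sig (S : Finset (Fin d)) j j' := by
    rw [Finset.sum_comm]
    refine Finset.sum_congr rfl fun j hj => Finset.sum_congr rfl fun j' hj' => ?_
    rw [hsymm (S : Finset (Fin d)) hS j hj j' hj']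
  have hC : ∑ j ∈ (S : Finset (Fin d)), ∑ j' ∈ (S : Finset (Fin d)),
        Xof y (S : Finset (Fin d)) j j' * Sig (S : Finset (Fin d)) j j'
      = ((∑ j ∈ (S : Finset (Fin d)), ∑ j' ∈ (S : Finset (Fin d)),
          y (S, (j, j')) * Sig (S : Finset (Fin d)) j j')
        + ∑ j ∈ (S : Finset (Fin d)), ∑ j' ∈ (S : Finset (Fin d)),
          y (S, (j', j)) * Sig (S : Finset (Fin d)) j j') / 2 := by
    have inner : ∀ j ∈ (S : Finset (Fin d)),
        ∑ j' ∈ (S : Finset (Fin d)),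
          Xof y (S : Finset (Fin d)) j j' * Sig (S : Finset (Fin d)) j j'
        = ((∑ j' ∈ (S : Finset (Fin d)), y (S, (j, j')) * Sig (S : Finset (Fin d)) j j')
          + ∑ j' ∈ (S : Finset (Fin d)), y (S, (j', j)) * Sig (S : Finset (Fin d)) j j') / 2 := by
      intro j hj
      conv_rhs => rw [← Finset.sum_add_distrib, Finset.sum_div]
      refine Finset.sum_congr rfl fun j' hj' => ?_
      rw [Xof_apply_mem y hS hj hj', Subtype.coe_eta]
      ring
    rw [Finset.sum_congr rfl inner]
    conv_rhs => rw [← Finset.sum_add_distrib, Finset.sum_div]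
  rw [hA, hC, hB]
  ring

end Stmt12Aux




/-- Characterisation of compatibility of a sequence of positive semi-definite matrices
`Σ_𝕊 = (Σ_S : S ∈ 𝕊)`: a common positive semi-definite completion exists iff
`⟨X_𝕊, Σ_𝕊⟩_𝕊 ≥ 0` for all sequences `X_𝕊` of symmetric matrices with `A* X_𝕊 ⪰ 0`. -/
theorem stmt12 {d : ℕ} (𝕊 : Finset (Finset (Fin d)))
    (Sig : Finset (Fin d) → Matrix (Fin d) (Fin d) ℝ)
    (hsymm : ∀ S ∈ 𝕊, ∀ j ∈ S, ∀ j' ∈ S, Sig S j j' = Sig S j' j)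
    (hpsd : ∀ S ∈ 𝕊, ∀ v : Fin d → ℝ,
      0 ≤ ∑ j ∈ S, ∑ j' ∈ S, v j * Sig S j j' * v j') :
    (∃ M : Matrix (Fin d) (Fin d) ℝ, M.PosSemidef ∧
        ∀ S ∈ 𝕊, ∀ j ∈ S, ∀ j' ∈ S, M j j' = Sig S j j')
      ↔ ∀ X𝕊 : Finset (Fin d) → Matrix (Fin d) (Fin d) ℝ,
          (∀ S ∈ 𝕊, (X𝕊 S).IsSymm) →
          (Matrix.of fun j j' : Fin d =>
              ∑ S ∈ 𝕊.filter (fun S => j ∈ S ∧ j' ∈ S), X𝕊 S j j').PosSemidef →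
          0 ≤ ∑ S ∈ 𝕊, ∑ j ∈ S, ∑ j' ∈ S, X𝕊 S j j' * Sig S j j' := by
  classical
  constructor
  · rintro ⟨M, hM, hMe⟩ X hXs hXp
    have hrw : ∀ S ∈ 𝕊, ∑ j ∈ S, ∑ j' ∈ S, X S j j' * Sig S j j'
        = ∑ j ∈ S, ∑ j' ∈ S, X S j j' * M j j' := fun S hS =>
      Finset.sum_congr rfl fun j hj => Finset.sum_congr rfl fun j' hj' => by
        rw [hMe S hS j hj j' hj']
    have step : ∀ j j' : Fin d, (Matrix.of fun j j' : Fin d =>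
          ∑ S ∈ 𝕊.filter (fun S => j ∈ S ∧ j' ∈ S), X S j j') j j' * M j j'
        = ∑ S ∈ 𝕊, if j ∈ S ∧ j' ∈ S then X S j j' * M j j' else 0 := by
      intro j j'
      simp only [Matrix.of_apply]
      rw [Finset.sum_filter, Finset.sum_mul]
      exact Finset.sum_congr rfl fun S _ => by split <;> simp
    have swap : ∑ j, ∑ j', ∑ S ∈ 𝕊, (if j ∈ S ∧ j' ∈ S then X S j j' * M j j' else 0)
        = ∑ S ∈ 𝕊, ∑ j, ∑ j', (if j ∈ S ∧ j' ∈ S then X S j j' * M j j' else 0) := by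
      calc ∑ j, ∑ j', ∑ S ∈ 𝕊, (if j ∈ S ∧ j' ∈ S then X S j j' * M j j' else 0)
          = ∑ j, ∑ S ∈ 𝕊, ∑ j', (if j ∈ S ∧ j' ∈ S then X S j j' * M j j' else 0) :=
            Finset.sum_congr rfl fun j _ => Finset.sum_comm
        _ = ∑ S ∈ 𝕊, ∑ j, ∑ j', (if j ∈ S ∧ j' ∈ S then X S j j' * M j j' else 0) :=
            Finset.sum_comm
    calc (0:ℝ) ≤ ∑ j, ∑ j', (Matrix.of fun j j' : Fin d =>
            ∑ S ∈ 𝕊.filter (fun S => j ∈ S ∧ j' ∈ S), X S j j') j j' * M j j' :=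
          Stmt12Aux.psd_sum_mul_nonneg hXp hM
      _ = ∑ S ∈ 𝕊, ∑ j, ∑ j', (if j ∈ S ∧ j' ∈ S then X S j j' * M j j' else 0) := by
          simp only [step]; exact swap
      _ = ∑ S ∈ 𝕊, ∑ j ∈ S, ∑ j' ∈ S, X S j j' * M j j' :=
          Finset.sum_congr rfl fun S _ => Stmt12Aux.double_ite_sum S _
      _ = ∑ S ∈ 𝕊, ∑ j ∈ S, ∑ j' ∈ S, X S j j' * Sig S j j' :=
          (Finset.sum_congr rfl hrw).symm
  · intro h
    have hsep : Stmt12Aux.bvec 𝕊 Sig ∈ (Stmt12Aux.Kcone 𝕊).map (Stmt12Aux.lmap 𝕊) := by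
      rw [ProperCone.relative_hyperplane_separation]
      intro y hy
      rw [real_inner_comm, Stmt12Aux.inner_y_bvec y Sig hsymm]
      exact h (Stmt12Aux.Xof y) (fun S _ => Stmt12Aux.Xof_isSymm y S) (Stmt12Aux.Xof_psd y hy)
    obtain ⟨m, hm, hlm⟩ := Stmt12Aux.exists_of_mem_map 𝕊 hsep
    refine ⟨Stmt12Aux.matOf m, Stmt12Aux.Kset_psd 𝕊 hm, ?_⟩
    intro S hS j hj j' hj'
    have hε : Stmt12Aux.lmap 𝕊 m (⟨S, hS⟩, (j, j')) = Stmt12Aux.bvec 𝕊 Sig (⟨S, hS⟩, (j, j')) := by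
      rw [hlm]
    rw [Stmt12Aux.lmap_apply, Stmt12Aux.bvec_apply] at hε
    rw [if_pos ⟨hj, hj'⟩, if_pos ⟨hj, hj'⟩] at hε
    exact hε
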